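/- Let A and B be positive self-adjoint bounded operators on a Hilbert space and let s ∈ [0,1]. Then the operator norm satisfies ‖A^s B^s‖ ≤ ‖AB‖^s. -/

import Mathlib

set_option maxHeartbeats 1000000

open NormedSpace Complex Set

section CordesAux

variable {H : Type*} [NormedAddCommGroup H] [InnerProductSpace ℂ H] [CompleteSpace H]

private lemma cordes_norm_one_le : ‖(1 : H →L[ℂ] H)‖ ≤ 1 := by
  rw [ContinuousLinearMap.one_def]; exact ContinuousLinearMap.norm_id_le

private lemma cordes_unitary_norm_le {u : H →L[ℂ] H} (hu : u ∈ unitary (H →L[ℂ] H)) :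
    ‖u‖ ≤ 1 := by
  have h1 : star u * u = 1 := Unitary.mem_iff.mp hu |>.1
  have h2 : ‖star u * u‖ = ‖u‖ * ‖u‖ := CStarRing.norm_star_mul_self
  rw [h1] at h2
  nlinarith [norm_nonneg u, cordes_norm_one_le (H := H)]

/-- The C*-trick: if `u` is unitary and commutes with the selfadjoint `a`, then
`‖a * u * b‖ = ‖a * b‖` for selfadjoint `b`. -/
private lemma cordes_norm_mul_unitary_mul {a b u : H →L[ℂ] H}
    (ha : IsSelfAdjoint a) (hb : IsSelfAdjoint b) (hu : u ∈ unitary (H →L[ℂ] H))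
    (hcomm : a * u = u * a) : ‖a * u * b‖ = ‖a * b‖ := by
  have hu' : star u * u = 1 := Unitary.mem_iff.mp hu |>.1
  have hAA : ∀ c : H →L[ℂ] H, star u * (a * (a * (u * c))) = a * (a * c) := fun c => by
    rw [← mul_assoc a u c, hcomm, mul_assoc u a c, ← mul_assoc a u (a * c), hcomm,
      mul_assoc u a (a * c), ← mul_assoc (star u) u _, hu', one_mul]
  have h1 : ‖a * u * b‖ * ‖a * u * b‖ = ‖a * b‖ * ‖a * b‖ := by
    rw [← CStarRing.norm_star_mul_self, ← CStarRing.norm_star_mul_self]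
    congr 1
    simp only [star_mul, ha.star_eq, hb.star_eq, mul_assoc]
    rw [hAA]
  have := congrArg Real.sqrt h1
  rwa [Real.sqrt_mul_self (norm_nonneg _), Real.sqrt_mul_self (norm_nonneg _)] at this

private lemma cordes_exp_coe_smul (l : H →L[ℂ] H) (x : ℝ) :
    exp ((x : ℂ) • l) = exp (x • l) := by
  rw [show ((x : ℂ) • l) = x • l by rw [← Complex.coe_algebraMap, algebraMap_smul]]

private lemma cordes_exp_unitary {l : H →L[ℂ] H} (hl : IsSelfAdjoint l) (y : ℝ) :
    exp (((y : ℂ) * I) • l) ∈ unitary (H →L[ℂ] H) := by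
  letI : NormedAlgebra ℚ (H →L[ℂ] H) := .restrictScalars ℚ ℂ _
  refine exp_mem_unitary_of_mem_skewAdjoint ?_
  rw [skewAdjoint.mem_iff, star_smul, hl.star_eq, ← neg_smul]
  congr 1
  simp [Complex.ext_iff]

/-- `exp (x • log a) = a ^ x` via cfc, for `a` selfadjoint with spectrum in `[ε, ∞)`. -/
private lemma cordes_exp_smul_log (a : H →L[ℂ] H) (ha : IsSelfAdjoint a) {ε : ℝ} (hε : 0 < ε)
    (haσ : spectrum ℝ a ⊆ Set.Ici ε) (x : ℝ) :
    exp ((x : ℂ) • CFC.log a) = cfc (fun t : ℝ => t ^ x) a := by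
  have hσ : ∀ t ∈ spectrum ℝ a, (0 : ℝ) < t := fun t ht => lt_of_lt_of_le hε (haσ ht)
  have hlog : ContinuousOn Real.log (spectrum ℝ a) :=
    Real.continuousOn_log.mono fun t ht => by simpa using (hσ t ht).ne'
  have h1 : x • CFC.log a = cfc (fun t : ℝ => x * Real.log t) a := by
    rw [CFC.log, cfc_const_mul x Real.log a hlog]
  rw [cordes_exp_coe_smul, h1, ← CFC.real_exp_eq_normedSpace_exp (cfc_predicate _ a),
    ← cfc_comp' Real.exp (fun t : ℝ => x * Real.log t) a
      Real.continuous_exp.continuousOn ((continuousOn_const).mul hlog)]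
  exact cfc_congr fun t ht => by
    rw [Real.rpow_def_of_pos (hσ t ht), mul_comm]

private lemma cordes_exp_one_smul_log (a : H →L[ℂ] H) (ha : IsSelfAdjoint a) {ε : ℝ}
    (hε : 0 < ε) (haσ : spectrum ℝ a ⊆ Set.Ici ε) :
    exp ((1 : ℂ) • CFC.log a) = a := by
  rw [show ((1:ℂ)) = ((1:ℝ):ℂ) by norm_num, cordes_exp_smul_log a ha hε haσ 1]
  rw [show (fun t : ℝ => t ^ (1:ℝ)) = id from funext fun t => by simp [Real.rpow_one]]
  exact cfc_id ℝ a ha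

end CordesAux

section CordesEps

variable {H : Type*} [NormedAddCommGroup H] [InnerProductSpace ℂ H] [CompleteSpace H]

private lemma cordes_eps (a b : H →L[ℂ] H) (ha : IsSelfAdjoint a) (hb : IsSelfAdjoint b)
    {ε : ℝ} (hε : 0 < ε) (haσ : spectrum ℝ a ⊆ Set.Ici ε) (hbσ : spectrum ℝ b ⊆ Set.Ici ε)
    {s : ℝ} (hs : s ∈ Set.Icc (0:ℝ) 1) :
    ‖cfc (fun t : ℝ => t ^ s) a * cfc (fun t : ℝ => t ^ s) b‖ ≤ ‖a * b‖ ^ s := by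
  rcases subsingleton_or_nontrivial H with hH | hH
  · have : (cfc (fun t : ℝ => t ^ s) a * cfc (fun t : ℝ => t ^ s) b) = 0 := Subsingleton.elim _ _
    rw [this, norm_zero]
    exact Real.rpow_nonneg (norm_nonneg _) s
  set la := CFC.log a with hla_def
  set lb := CFC.log b with hlb_def
  have hla : IsSelfAdjoint la := IsSelfAdjoint.log
  have hlb : IsSelfAdjoint lb := IsSelfAdjoint.log
  set g : ℂ → H →L[ℂ] H := fun z => exp (z • la) * exp (z • lb) with hg
  have hdiff : Differentiable ℂ g := by
    have h1 : Differentiable ℂ ((fun z : ℂ => exp (z • la))) := fun z =>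
      (hasDerivAt_exp_smul_const la z).differentiableAt
    have h2 : Differentiable ℂ (fun z : ℂ => exp (z • lb)) := fun z =>
      (hasDerivAt_exp_smul_const lb z).differentiableAt
    exact h1.mul h2
  have hsplit : ∀ (l : H →L[ℂ] H) (z : ℂ),
      exp (z • l) = exp ((z.re : ℂ) • l) * exp (((z.im : ℂ) * I) • l) := by
    intro l z
    letI : NormedAlgebra ℚ (H →L[ℂ] H) := .restrictScalars ℚ ℂ _
    rw [← exp_add_of_commute (((Commute.refl l).smul_left _).smul_right _), ← add_smul]
    congr 2
    simp [Complex.ext_iff]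
  -- bound for the "real part" factor
  have hbound : ∀ (c : H →L[ℂ] H), IsSelfAdjoint c → spectrum ℝ c ⊆ Set.Ici ε →
      ∀ x : ℝ, x ∈ Set.Icc (0:ℝ) 1 → ‖exp ((x:ℂ) • CFC.log c)‖ ≤ max 1 ‖c‖ := by
    intro c hc hcσ x hx
    rw [cordes_exp_smul_log c hc hε hcσ x]
    refine norm_cfc_le (le_trans zero_le_one (le_max_left _ _)) fun t ht => ?_
    have ht0 : 0 < t := lt_of_lt_of_le hε (hcσ ht)
    have htc : t ≤ max 1 ‖c‖ :=
      le_trans (le_trans (le_abs_self t) (spectrum.norm_le_norm_of_mem ht)) (le_max_right _ _)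
    rw [Real.norm_eq_abs, _root_.abs_of_nonneg (Real.rpow_nonneg ht0.le x)]
    calc t ^ x ≤ (max 1 ‖c‖) ^ x := Real.rpow_le_rpow ht0.le htc hx.1
      _ ≤ (max 1 ‖c‖) ^ (1:ℝ) := Real.rpow_le_rpow_of_exponent_le (le_max_left _ _) hx.2
      _ = max 1 ‖c‖ := Real.rpow_one _
  -- boundary at re = 0
  have hM0 : ∀ z ∈ Complex.re ⁻¹' {0}, ‖g z‖ ≤ 1 := by
    intro z hz
    have hz0 : z.re = 0 := hz
    have e1 : exp (z • la) = exp (((z.im : ℂ) * I) • la) := by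
      rw [hsplit la z, hz0]; simp [NormedSpace.exp_zero]
    have e2 : exp (z • lb) = exp (((z.im : ℂ) * I) • lb) := by
      rw [hsplit lb z, hz0]; simp [NormedSpace.exp_zero]
    calc ‖g z‖ ≤ ‖exp (z • la)‖ * ‖exp (z • lb)‖ := norm_mul_le _ _
      _ ≤ 1 * 1 := by
          rw [e1, e2]
          exact mul_le_mul (cordes_unitary_norm_le (cordes_exp_unitary hla z.im))
            (cordes_unitary_norm_le (cordes_exp_unitary hlb z.im)) (norm_nonneg _)
            zero_le_one
      _ = 1 := mul_one 1
  -- boundary at re = 1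
  have hM1 : ∀ z ∈ Complex.re ⁻¹' {1}, ‖g z‖ ≤ ‖a * b‖ := by
    intro z hz
    have hz1 : z.re = 1 := hz
    set u := exp (((z.im : ℂ) * I) • la) with hu_def
    set v := exp (((z.im : ℂ) * I) • lb) with hv_def
    have hu : u ∈ unitary (H →L[ℂ] H) := cordes_exp_unitary hla z.im
    have hv : v ∈ unitary (H →L[ℂ] H) := cordes_exp_unitary hlb z.im
    have e1 : exp (z • la) = a * u := by
      rw [hsplit la z, hz1, Complex.ofReal_one, cordes_exp_one_smul_log a ha hε haσ]
    have e2 : exp (z • lb) = b * v := by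
      rw [hsplit lb z, hz1, Complex.ofReal_one, cordes_exp_one_smul_log b hb hε hbσ]
    have hcomm : a * u = u * a := by
      have h := (Commute.exp (((Commute.refl la).smul_left ((1:ℂ))).smul_right
        ((z.im : ℂ) * I))).eq
      rwa [cordes_exp_one_smul_log a ha hε haσ] at h
    have hgz : g z = a * u * b * v := by
      rw [hg]; simp only []; rw [e1, e2]; noncomm_ring
    calc ‖g z‖ = ‖(a * u * b) * v‖ := by rw [hgz]
      _ ≤ ‖a * u * b‖ * ‖v‖ := norm_mul_le _ _
      _ ≤ ‖a * u * b‖ * 1 := by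
          exact mul_le_mul_of_nonneg_left (cordes_unitary_norm_le hv) (norm_nonneg _)
      _ = ‖a * b‖ := by rw [mul_one, cordes_norm_mul_unitary_mul ha hb hu hcomm]
  -- boundedness on the strip
  have hBdd : BddAbove ((norm ∘ g) '' (Complex.HadamardThreeLines.verticalClosedStrip 0 1)) := by
    refine ⟨(max 1 ‖a‖) * (max 1 ‖b‖), ?_⟩
    rintro r ⟨z, hz, rfl⟩
    have hzre : z.re ∈ Set.Icc (0:ℝ) 1 := hz
    have b1 : ‖exp (z • la)‖ ≤ max 1 ‖a‖ := by
      rw [hsplit la z]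
      calc ‖exp ((z.re : ℂ) • la) * exp (((z.im : ℂ) * I) • la)‖
          ≤ ‖exp ((z.re : ℂ) • la)‖ * ‖exp (((z.im : ℂ) * I) • la)‖ := norm_mul_le _ _
        _ ≤ (max 1 ‖a‖) * 1 := mul_le_mul (hbound a ha haσ z.re hzre)
            (cordes_unitary_norm_le (cordes_exp_unitary hla z.im)) (norm_nonneg _)
            (le_trans zero_le_one (le_max_left _ _))
        _ = max 1 ‖a‖ := mul_one _
    have b2 : ‖exp (z • lb)‖ ≤ max 1 ‖b‖ := by
      rw [hsplit lb z]
      calc ‖exp ((z.re : ℂ) • lb) * exp (((z.im : ℂ) * I) • lb)‖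
          ≤ ‖exp ((z.re : ℂ) • lb)‖ * ‖exp (((z.im : ℂ) * I) • lb)‖ := norm_mul_le _ _
        _ ≤ (max 1 ‖b‖) * 1 := mul_le_mul (hbound b hb hbσ z.re hzre)
            (cordes_unitary_norm_le (cordes_exp_unitary hlb z.im)) (norm_nonneg _)
            (le_trans zero_le_one (le_max_left _ _))
        _ = max 1 ‖b‖ := mul_one _
    calc ‖g z‖ ≤ ‖exp (z • la)‖ * ‖exp (z • lb)‖ := norm_mul_le _ _
      _ ≤ (max 1 ‖a‖) * (max 1 ‖b‖) := mul_le_mul b1 b2 (norm_nonneg _)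
          (le_trans zero_le_one (le_max_left _ _))
  -- apply Hadamard
  have hmem : (s : ℂ) ∈ Complex.HadamardThreeLines.verticalClosedStrip 0 1 := by
    simpa [Complex.HadamardThreeLines.verticalClosedStrip] using hs
  have happ := Complex.HadamardThreeLines.norm_le_interp_of_mem_verticalClosedStrip₀₁' g hmem
    (hdiff.diffContOnCl) hBdd hM0 hM1
  rw [Complex.ofReal_re, Real.one_rpow] at happ
  have hgs : g (s : ℂ) = cfc (fun t : ℝ => t ^ s) a * cfc (fun t : ℝ => t ^ s) b := by
    rw [hg]
    simp only []
    rw [cordes_exp_smul_log a ha hε haσ s, cordes_exp_smul_log b hb hε hbσ s]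
  rw [hgs, one_mul] at happ
  exact happ

end CordesEps

section CordesMain

variable {H : Type*} [NormedAddCommGroup H] [InnerProductSpace ℂ H] [CompleteSpace H]

private lemma cordes_rpow_add_le {x y s : ℝ} (hx : 0 ≤ x) (hy : 0 ≤ y) (hs0 : 0 ≤ s)
    (hs1 : s ≤ 1) : (x + y) ^ s ≤ x ^ s + y ^ s := by
  have h := NNReal.rpow_add_le_add_rpow (x.toNNReal) (y.toNNReal) hs0 hs1
  rw [← Real.toNNReal_add hx hy] at h
  have h2 := NNReal.coe_le_coe.mpr h
  rw [NNReal.coe_add, NNReal.coe_rpow, NNReal.coe_rpow, NNReal.coe_rpow,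
    Real.coe_toNNReal _ (add_nonneg hx hy), Real.coe_toNNReal _ hx, Real.coe_toNNReal _ hy] at h2
  exact h2

private lemma cordes_norm_rpow_le [Nontrivial H] (X : H →L[ℂ] H) (hX : IsSelfAdjoint X)
    (hσ : spectrum ℝ X ⊆ Set.Ici 0) {s : ℝ} (hs0 : 0 ≤ s) :
    ‖cfc (fun t : ℝ => t ^ s) X‖ ≤ ‖X‖ ^ s := by
  refine norm_cfc_le (Real.rpow_nonneg (norm_nonneg X) s) fun t ht => ?_
  have h0 : 0 ≤ t := hσ ht
  rw [Real.norm_eq_abs, _root_.abs_of_nonneg (Real.rpow_nonneg h0 s)]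
  exact Real.rpow_le_rpow h0 (le_trans (le_abs_self t) (spectrum.norm_le_norm_of_mem ht)) hs0

private lemma cordes_norm_algebraMap_le {ε : ℝ} (hε : 0 ≤ ε) :
    ‖algebraMap ℝ (H →L[ℂ] H) ε‖ ≤ ε := by
  rw [Algebra.algebraMap_eq_smul_one, norm_smul, Real.norm_eq_abs, _root_.abs_of_nonneg hε]
  calc ε * ‖(1 : H →L[ℂ] H)‖ ≤ ε * 1 :=
    mul_le_mul_of_nonneg_left cordes_norm_one_le hε
  _ = ε := mul_one ε

theorem cordes_inequality'
    (A B : H →L[ℂ] H) (hA : IsSelfAdjoint A) (hB : IsSelfAdjoint B)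
    (hApos : spectrum ℝ A ⊆ Set.Ici 0) (hBpos : spectrum ℝ B ⊆ Set.Ici 0)
    (s : ℝ) (hs : s ∈ Set.Icc (0:ℝ) 1) :
    ‖cfc (fun t : ℝ => t ^ s) A * cfc (fun t : ℝ => t ^ s) B‖ ≤ ‖A * B‖ ^ s := by
  rcases subsingleton_or_nontrivial H with hH | hH
  · have h0 : (cfc (fun t : ℝ => t ^ s) A * cfc (fun t : ℝ => t ^ s) B) = 0 :=
      Subsingleton.elim _ _
    rw [h0, norm_zero]
    exact Real.rpow_nonneg (norm_nonneg _) s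
  rcases eq_or_lt_of_le hs.1 with hs0 | hs0
  · -- s = 0
    rw [← hs0]
    have h1 : (fun t : ℝ => t ^ (0:ℝ)) = fun _ : ℝ => (1:ℝ) := funext fun t => Real.rpow_zero t
    rw [h1, cfc_const 1 A hA, cfc_const 1 B hB, map_one, one_mul, Real.rpow_zero]
    exact cordes_norm_one_le
  have hs1 := hs.2
  have hrpc : Continuous (fun t : ℝ => t ^ s) := by
    rw [continuous_iff_continuousAt]
    exact fun t => Real.continuousAt_rpow_const t s (Or.inr hs.1)
  set K : ℝ := ‖B‖ ^ s + (‖A‖ + 1) ^ s with hK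
  set C : ℝ := ‖A‖ + ‖B‖ + 1 with hC
  have claim : ∀ ε ∈ Set.Ioc (0:ℝ) 1,
      ‖cfc (fun t : ℝ => t ^ s) A * cfc (fun t : ℝ => t ^ s) B‖
        ≤ (‖A * B‖ + C * ε) ^ s + K * ε ^ s := by
    intro ε hεmem
    obtain ⟨hε0, hε1⟩ := hεmem
    set e : H →L[ℂ] H := algebraMap ℝ (H →L[ℂ] H) ε with he
    set aε : H →L[ℂ] H := cfc (fun t : ℝ => t + ε) A with haε
    set bε : H →L[ℂ] H := cfc (fun t : ℝ => t + ε) B with hbε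
    have haεsa : IsSelfAdjoint aε := cfc_predicate _ A
    have hbεsa : IsSelfAdjoint bε := cfc_predicate _ B
    have haεσ : spectrum ℝ aε ⊆ Set.Ici ε := by
      rw [haε, cfc_map_spectrum (f := fun t : ℝ => t + ε) (a := A) hA (by fun_prop)]
      rintro - ⟨t, ht, rfl⟩
      have := hApos ht; simp only [Set.mem_Ici] at this ⊢; linarith
    have hbεσ : spectrum ℝ bε ⊆ Set.Ici ε := by
      rw [hbε, cfc_map_spectrum (f := fun t : ℝ => t + ε) (a := B) hB (by fun_prop)]
      rintro - ⟨t, ht, rfl⟩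
      have := hBpos ht; simp only [Set.mem_Ici] at this ⊢; linarith
    have haε_eq : aε = e + A := by
      rw [haε, show (fun t : ℝ => t + ε) = fun t : ℝ => ε + id t from funext fun t => add_comm t ε,
        cfc_const_add ε id A continuousOn_id hA, cfc_id ℝ A hA]
    have hbε_eq : bε = e + B := by
      rw [hbε, show (fun t : ℝ => t + ε) = fun t : ℝ => ε + id t from funext fun t => add_comm t ε,
        cfc_const_add ε id B continuousOn_id hB, cfc_id ℝ B hB]
    have hnorme : ‖e‖ ≤ ε := cordes_norm_algebraMap_le hε0.le
    have haεnorm : ‖aε‖ ≤ ‖A‖ + ε := by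
      rw [haε_eq]
      calc ‖e + A‖ ≤ ‖e‖ + ‖A‖ := norm_add_le _ _
        _ ≤ ε + ‖A‖ := by linarith
        _ = ‖A‖ + ε := add_comm _ _
    have hABε : ‖aε * bε‖ ≤ ‖A * B‖ + C * ε := by
      have expand : aε * bε = A * B + (e * B + A * e + e * e) := by
        rw [haε_eq, hbε_eq]; noncomm_ring
      have h1 : ‖e * B‖ ≤ ε * ‖B‖ :=
        le_trans (norm_mul_le _ _) (mul_le_mul_of_nonneg_right hnorme (norm_nonneg _))
      have h2 : ‖A * e‖ ≤ ‖A‖ * ε :=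
        le_trans (norm_mul_le _ _) (mul_le_mul_of_nonneg_left hnorme (norm_nonneg _))
      have h3 : ‖e * e‖ ≤ ε * ε :=
        le_trans (norm_mul_le _ _) (mul_le_mul hnorme hnorme (norm_nonneg _) hε0.le)
      calc ‖aε * bε‖ ≤ ‖A * B‖ + (‖e * B‖ + ‖A * e‖ + ‖e * e‖) := by
            rw [expand]
            refine le_trans (norm_add_le _ _) ?_
            gcongr
            exact le_trans (norm_add_le _ _) (by gcongr; exact norm_add_le _ _)
        _ ≤ ‖A * B‖ + C * ε := by rw [hC]; nlinarith
    -- identification of the powers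
    have hstepA : cfc (fun t : ℝ => t ^ s) aε = cfc (fun t : ℝ => (t + ε) ^ s) A := by
      rw [haε, ← cfc_comp' (fun t : ℝ => t ^ s) (fun t : ℝ => t + ε) A
        hrpc.continuousOn (by fun_prop)]
    have hstepB : cfc (fun t : ℝ => t ^ s) bε = cfc (fun t : ℝ => (t + ε) ^ s) B := by
      rw [hbε, ← cfc_comp' (fun t : ℝ => t ^ s) (fun t : ℝ => t + ε) B
        hrpc.continuousOn (by fun_prop)]
    have hdiffbound : ∀ (X : H →L[ℂ] H), IsSelfAdjoint X → spectrum ℝ X ⊆ Set.Ici 0 →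
        ‖cfc (fun t : ℝ => (t + ε) ^ s) X - cfc (fun t : ℝ => t ^ s) X‖ ≤ ε ^ s := by
      intro X hX hXσ
      rw [← cfc_sub (fun t : ℝ => (t + ε) ^ s) (fun t : ℝ => t ^ s) X
        (by fun_prop) hrpc.continuousOn]
      refine norm_cfc_le (Real.rpow_nonneg hε0.le s) fun t ht => ?_
      have ht0 : 0 ≤ t := hXσ ht
      have hmono : t ^ s ≤ (t + ε) ^ s :=
        Real.rpow_le_rpow ht0 (le_add_of_nonneg_right hε0.le) hs.1
      rw [Real.norm_eq_abs, _root_.abs_of_nonneg (by linarith)]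
      have := cordes_rpow_add_le ht0 hε0.le hs.1 hs1
      linarith
    set As := cfc (fun t : ℝ => t ^ s) A with hAs
    set Bs := cfc (fun t : ℝ => t ^ s) B with hBs
    set Aεs := cfc (fun t : ℝ => t ^ s) aε with hAεs
    set Bεs := cfc (fun t : ℝ => t ^ s) bε with hBεs
    have hdA : ‖As - Aεs‖ ≤ ε ^ s := by
      rw [hstepA, hAs, norm_sub_rev]
      exact hdiffbound A hA hApos
    have hdB : ‖Bs - Bεs‖ ≤ ε ^ s := by
      rw [hstepB, hBs, norm_sub_rev]
      exact hdiffbound B hB hBpos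
    have hnBs : ‖Bs‖ ≤ ‖B‖ ^ s := cordes_norm_rpow_le B hB hBpos hs.1
    have hnAεs : ‖Aεs‖ ≤ (‖A‖ + 1) ^ s := by
      refine le_trans (cordes_norm_rpow_le aε haεsa
        (haεσ.trans (Set.Ici_subset_Ici.mpr hε0.le)) hs.1) ?_
      exact Real.rpow_le_rpow (norm_nonneg _) (by linarith) hs.1
    have hmain : ‖Aεs * Bεs‖ ≤ (‖A * B‖ + C * ε) ^ s := by
      refine le_trans (cordes_eps aε bε haεsa hbεsa hε0 haεσ hbεσ hs) ?_
      exact Real.rpow_le_rpow (norm_nonneg _) hABε hs.1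
    have hsplit2 : As * Bs = Aεs * Bεs + ((As - Aεs) * Bs + Aεs * (Bs - Bεs)) := by
      noncomm_ring
    calc ‖As * Bs‖ ≤ ‖Aεs * Bεs‖ + (‖(As - Aεs) * Bs‖ + ‖Aεs * (Bs - Bεs)‖) := by
          rw [hsplit2]
          exact le_trans (norm_add_le _ _) (by gcongr; exact norm_add_le _ _)
      _ ≤ (‖A * B‖ + C * ε) ^ s + (ε ^ s * ‖B‖ ^ s + (‖A‖ + 1) ^ s * ε ^ s) := by
          refine add_le_add hmain (add_le_add ?_ ?_)
          · exact le_trans (norm_mul_le _ _)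
              (mul_le_mul hdA hnBs (norm_nonneg _) (Real.rpow_nonneg hε0.le s))
          · exact le_trans (norm_mul_le _ _)
              (mul_le_mul hnAεs hdB (norm_nonneg _) (Real.rpow_nonneg (by positivity) s))
      _ = (‖A * B‖ + C * ε) ^ s + K * ε ^ s := by rw [hK]; ring
  -- now take the limit ε → 0⁺
  have part1 : Filter.Tendsto (fun ε : ℝ => (‖A * B‖ + C * ε) ^ s)
      (nhdsWithin 0 (Set.Ioi 0)) (nhds (‖A * B‖ ^ s)) := by
    have hcont : ContinuousAt (fun x : ℝ => x ^ s) ‖A * B‖ :=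
      Real.continuousAt_rpow_const _ s (Or.inr hs.1)
    have hlin : Filter.Tendsto (fun ε : ℝ => ‖A * B‖ + C * ε)
        (nhdsWithin 0 (Set.Ioi 0)) (nhds ‖A * B‖) := by
      have hc : Continuous (fun ε : ℝ => ‖A * B‖ + C * ε) := by continuity
      have h0 := (hc.tendsto 0).mono_left (nhdsWithin_le_nhds (s := Set.Ioi (0:ℝ)))
      simpa using h0
    exact hcont.tendsto.comp hlin
  have part2 : Filter.Tendsto (fun ε : ℝ => ε ^ s)
      (nhdsWithin 0 (Set.Ioi 0)) (nhds 0) := by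
    have hcont : ContinuousAt (fun x : ℝ => x ^ s) 0 :=
      Real.continuousAt_rpow_const _ s (Or.inr hs.1)
    have := hcont.tendsto.mono_left (nhdsWithin_le_nhds (s := Set.Ioi (0:ℝ)))
    rwa [Real.zero_rpow hs0.ne'] at this
  have htends : Filter.Tendsto (fun ε : ℝ => (‖A * B‖ + C * ε) ^ s + K * ε ^ s)
      (nhdsWithin 0 (Set.Ioi 0)) (nhds (‖A * B‖ ^ s)) := by
    have := part1.add ((tendsto_const_nhds (x := K)).mul part2)
    simpa using this
  refine ge_of_tendsto htends ?_
  filter_upwards [Ioc_mem_nhdsGT zero_lt_one] with ε hε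
  exact claim ε hε

end CordesMain


/-- **Cordes inequality.** If `A`, `B` are positive self-adjoint bounded operators
on a Hilbert space and `s ∈ [0,1]`, then `‖A^s B^s‖ ≤ ‖AB‖^s`, where fractional
powers are defined via the continuous functional calculus. -/
theorem cordes_inequality
    {H : Type*} [NormedAddCommGroup H] [InnerProductSpace ℂ H] [CompleteSpace H]
    (A B : H →L[ℂ] H) (hA : IsSelfAdjoint A) (hB : IsSelfAdjoint B)
    (hApos : spectrum ℝ A ⊆ Set.Ici 0) (hBpos : spectrum ℝ B ⊆ Set.Ici 0)
    (s : ℝ) (hs : s ∈ Set.Icc (0:ℝ) 1) :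
    ‖cfc (fun t : ℝ => t ^ s) A * cfc (fun t : ℝ => t ^ s) B‖ ≤ ‖A * B‖ ^ s :=
  cordes_inequality' A B hA hB hApos hBpos s hs
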